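/- Let R be a commutative ring and J = (f1,…,fn). Suppose h ∈ R is integral over J^{n+k-1}. For the blowup Y of the ideal (h) + J^{n+k-1} with charts Y_i = Spec R[h/f_i^{n+k-1}, f1/f_i, …, fn/f_i], the element h lies in the ideal generated by the degree-(n+k-1) monomials in f1,…,fn within each chart ring; i.e., h/f_i^{n+k-1} is integral over R_i = R[f1/f_i,…,fn/f_i] and h ∈ (f1,…,fn)^{n+k-1}·Γ(Y_i, O_{Y_i}). -/
import Mathlib


/-- `h` is integral over the ideal `I`. -/
def IdealIntegral {R : Type*} [CommRing R] (I : Ideal R) (h : R) : Prop :=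
  ∃ d : ℕ, 0 < d ∧ ∃ a : ℕ → R, (∀ j, 1 ≤ j → j ≤ d → a j ∈ I ^ j) ∧
    h ^ d + ∑ j ∈ Finset.range d, a (j + 1) * h ^ (d - (j + 1)) = 0

lemma away_mul_invSelf {R : Type*} [CommRing R] (x : R) :
    algebraMap R (Localization.Away x) x * Localization.Away.invSelf x = 1 := by
  rw [Localization.Away.invSelf, ← Localization.mk_one_eq_algebraMap, Localization.mk_mul,
    mul_one, one_mul]
  exact Localization.mk_self ⟨x, Submonoid.mem_powers x⟩

/-- If `g ∈ J ^ m` with `J = (f 1, …, f n)`, then `g / f i ^ m` lies in the subalgebra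
generated by the `f j / f i`. -/
lemma mem_adjoin_of_mem_pow {R : Type*} [CommRing R] {n : ℕ} (f : Fin n → R) (i : Fin n)
    (m : ℕ) (g : R) (hg : g ∈ (Ideal.span (Set.range f)) ^ m) :
    algebraMap R (Localization.Away (f i)) g * (Localization.Away.invSelf (f i)) ^ m ∈
      Algebra.adjoin R (Set.range fun j : Fin n =>
        algebraMap R (Localization.Away (f i)) (f j) * Localization.Away.invSelf (f i)) := by
  set L := Localization.Away (f i)
  set v := Localization.Away.invSelf (f i)
  set A := Algebra.adjoin R (Set.range fun j : Fin n =>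
        algebraMap R L (f j) * v) with hA
  have base : ∀ b ∈ Ideal.span (Set.range f), algebraMap R L b * v ∈ A := by
    intro b hb
    refine Submodule.span_induction ?_ ?_ ?_ ?_ hb
    · rintro x ⟨j, rfl⟩
      exact Algebra.subset_adjoin ⟨j, rfl⟩
    · simpa using A.zero_mem
    · intro x y _ _ hx hy
      rw [map_add, add_mul]
      exact A.add_mem hx hy
    · intro r x _ hx
      rw [smul_eq_mul, map_mul, mul_assoc]
      exact A.mul_mem (A.algebraMap_mem r) hx
  induction m generalizing g with
  | zero => simpa using A.algebraMap_mem g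
  | succ m ih =>
    rw [pow_succ] at hg
    refine Submodule.mul_induction_on hg ?_ ?_
    · intro x hx y hy
      have : algebraMap R L (x * y) * v ^ (m + 1)
          = (algebraMap R L x * v ^ m) * (algebraMap R L y * v) := by
        rw [map_mul, pow_succ]; ring
      rw [this]
      exact A.mul_mem (ih x hx) (base y hy)
    · intro x y hx hy
      rw [map_add, add_mul]
      exact A.add_mem hx hy

/-- Suppose `h` is integral over `J ^ (n + k - 1)` where `J = (f 1, …, f n)`.  Then in the
localization `R[1/f i]`, the element `u = h / f i ^ (n + k - 1)` is integral over the
subring `R_i = R[f 1/f i, …, f n/f i]`, and in the chart ring `B i = R_i[u]` of the blowup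
of `(h) + J ^ (n + k - 1)` one has `h ∈ J ^ (n + k - 1) ⬝ B i`. -/
theorem stmt19 {R : Type*} [CommRing R] {n : ℕ} (f : Fin n → R) (k : ℕ) (hk : 1 ≤ k)
    (h : R) (hint : IdealIntegral ((Ideal.span (Set.range f)) ^ (n + k - 1)) h)
    (i : Fin n) :
    IsIntegral
      (Algebra.adjoin R (Set.range fun j : Fin n =>
        algebraMap R (Localization.Away (f i)) (f j) * Localization.Away.invSelf (f i)))
      (algebraMap R (Localization.Away (f i)) h *
        (Localization.Away.invSelf (f i)) ^ (n + k - 1)) ∧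
    ∃ hmem : algebraMap R (Localization.Away (f i)) h ∈
        Algebra.adjoin R ((Set.range fun j : Fin n =>
            algebraMap R (Localization.Away (f i)) (f j) * Localization.Away.invSelf (f i)) ∪
          {algebraMap R (Localization.Away (f i)) h *
            (Localization.Away.invSelf (f i)) ^ (n + k - 1)}),
      (⟨algebraMap R (Localization.Away (f i)) h, hmem⟩ :
          Algebra.adjoin R ((Set.range fun j : Fin n =>
            algebraMap R (Localization.Away (f i)) (f j) * Localization.Away.invSelf (f i)) ∪
          {algebraMap R (Localization.Away (f i)) h *
            (Localization.Away.invSelf (f i)) ^ (n + k - 1)})) ∈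
        Ideal.span { x : (Algebra.adjoin R ((Set.range fun j : Fin n =>
            algebraMap R (Localization.Away (f i)) (f j) * Localization.Away.invSelf (f i)) ∪
          {algebraMap R (Localization.Away (f i)) h *
            (Localization.Away.invSelf (f i)) ^ (n + k - 1)})) |
          ∃ g ∈ (Ideal.span (Set.range f)) ^ (n + k - 1),
          (x : Localization.Away (f i)) = algebraMap R (Localization.Away (f i)) g } := by
  classical
  set L := Localization.Away (f i) with hL
  set φ := algebraMap R L with hφ
  set v := Localization.Away.invSelf (f i) with hv
  set m := n + k - 1 with hm
  set u := φ h * v ^ m with hu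
  obtain ⟨d, hd, a, ha, heq⟩ := hint
  set A := Algebra.adjoin R (Set.range fun j : Fin n => φ (f j) * v) with hA
  -- the coefficients of the integral equation for `u`
  set c : ℕ → L := fun j => φ (a j) * v ^ (m * j) with hc
  have hcA : ∀ j, 1 ≤ j → j ≤ d → c j ∈ A := by
    intro j h1 h2
    apply mem_adjoin_of_mem_pow
    rw [pow_mul]
    exact ha j h1 h2
  have hexp : ∀ j : ℕ, j + 1 ≤ d → m * (j + 1) + m * (d - (j + 1)) = m * d := by
    intro j hj
    rw [← Nat.mul_add, Nat.add_sub_cancel' hj]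
  -- the key equation satisfied by `u`
  have key : u ^ d + ∑ j ∈ Finset.range d, c (j + 1) * u ^ (d - (j + 1)) = 0 := by
    have E := congrArg φ heq
    simp only [map_add, map_sum, map_mul, map_pow, map_zero] at E
    calc u ^ d + ∑ j ∈ Finset.range d, c (j + 1) * u ^ (d - (j + 1))
        = (φ h ^ d + ∑ j ∈ Finset.range d, φ (a (j + 1)) * φ h ^ (d - (j + 1))) * v ^ (m * d) := by
          rw [add_mul, Finset.sum_mul]
          congr 1
          · rw [hu, mul_pow, ← pow_mul]
          · refine Finset.sum_congr rfl fun j hj => ?_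
            have hjd : j + 1 ≤ d := Finset.mem_range.mp hj
            simp only [hc, hu]
            rw [mul_pow, ← pow_mul, ← hexp j hjd, pow_add]
            ring
      _ = 0 := by rw [E, zero_mul]
  have hint' : IsIntegral A u := by
    set cA : ℕ → A := fun j => if hj : 1 ≤ j ∧ j ≤ d then ⟨c j, hcA j hj.1 hj.2⟩ else 0 with hcAdef
    refine ⟨Polynomial.X ^ d + ∑ j ∈ Finset.range d,
      Polynomial.C (cA (j + 1)) * Polynomial.X ^ (d - (j + 1)), ?_, ?_⟩
    · have hdeg : (∑ j ∈ Finset.range d,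
          Polynomial.C (cA (j + 1)) * Polynomial.X ^ (d - (j + 1))).degree
          ≤ ((d - 1 : ℕ) : WithBot ℕ) := by
        refine (Polynomial.degree_sum_le _ _).trans ?_
        refine Finset.sup_le fun j hj => ?_
        refine (Polynomial.degree_C_mul_X_pow_le _ _).trans ?_
        exact Nat.cast_le.mpr (by omega : d - (j + 1) ≤ d - 1)
      exact Polynomial.monic_X_pow_add (lt_of_le_of_lt hdeg (Nat.cast_lt.mpr (by omega)))
    · have hcast : ∀ j ∈ Finset.range d, algebraMap A L (cA (j + 1)) = c (j + 1) := by
        intro j hj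
        have hjd : j + 1 ≤ d := Finset.mem_range.mp hj
        simp only [hcAdef, dif_pos (⟨Nat.le_add_left 1 j, hjd⟩ : 1 ≤ j + 1 ∧ j + 1 ≤ d)]
        rfl
      show Polynomial.eval₂ (algebraMap A L) u _ = 0
      rw [Polynomial.eval₂_add, Polynomial.eval₂_X_pow, Polynomial.eval₂_finset_sum]
      rw [← key]
      congr 1
      refine Finset.sum_congr rfl fun j hj => ?_
      rw [Polynomial.eval₂_mul, Polynomial.eval₂_C, Polynomial.eval₂_X_pow, hcast j hj]
  refine ⟨hint', ?_⟩
  set B := Algebra.adjoin R ((Set.range fun j : Fin n => φ (f j) * v) ∪ {u}) with hB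
  have hfiv : φ (f i) * v = 1 := away_mul_invSelf (f i)
  have huB : u ∈ B := Algebra.subset_adjoin (Set.mem_union_right _ rfl)
  have hh : φ h = u * φ (f i ^ m) := by
    rw [map_pow, hu, mul_assoc, ← mul_pow, mul_comm v (φ (f i)), hfiv, one_pow, mul_one]
  have hmem : φ h ∈ B := by
    rw [hh]
    exact B.mul_mem huB (B.algebraMap_mem _)
  refine ⟨hmem, ?_⟩
  have hfim : f i ^ m ∈ (Ideal.span (Set.range f)) ^ m :=
    Ideal.pow_mem_pow (Ideal.subset_span (Set.mem_range_self i)) m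
  have hxset : (⟨φ (f i ^ m), B.algebraMap_mem _⟩ : ↥B) ∈
      { x : ↥B | ∃ g ∈ (Ideal.span (Set.range f)) ^ m, (x : L) = φ g } :=
    ⟨f i ^ m, hfim, rfl⟩
  have : (⟨φ h, hmem⟩ : ↥B) = ⟨u, huB⟩ * ⟨φ (f i ^ m), B.algebraMap_mem _⟩ := by
    ext
    exact hh
  rw [this]
  exact Ideal.mul_mem_left _ _ (Ideal.subset_span hxset)
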